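/- Let g be a 4-dimensional real Lie algebra and let ((J₁, R₁, σ₁), (J₂, R₂, σ₂)) be a generalized Kähler structure on g with R₁ ≠ 0 and R₂ ≠ 0. Then either R₁ and R₂ are both bijective, or rank R₁ = rank R₂ = 2 and Im R₁ ∩ Im R₂ = {0}. -/

import Mathlib

open Module LinearMap

variable {g : Type*} [LieRing g] [LieAlgebra ℝ g]

/-- The coadjoint action: `(coad u α) v = -α ⁅u, v⁆`. -/
noncomputable def coad (u : g) (α : Module.Dual ℝ g) : Module.Dual ℝ g :=
  -(α ∘ₗ (LieAlgebra.ad ℝ g u : g →ₗ[ℝ] g))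

/-- The bracket `⁅u + α, v + β⁆▷ = ⁅u, v⁆ + ad*_u β - ad*_v α` on `g ⊕ g*`. -/
noncomputable def dbracket (a b : g × Module.Dual ℝ g) : g × Module.Dual ℝ g :=
  (⁅a.1, b.1⁆, coad a.1 b.2 - coad b.1 a.2)

/-- The neutral pairing `⟨u + α, v + β⟩ = (α v + β u)/2` on `g ⊕ g*`. -/
noncomputable def pairing (a b : g × Module.Dual ℝ g) : ℝ :=
  (a.2 b.1 + b.2 a.1) / 2

/-- `dτ(u,v,w) = -τ(⁅u,v⁆,w) + τ(⁅u,w⁆,v) - τ(⁅v,w⁆,u)`. -/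
noncomputable def dForm (τ : g → g → ℝ) (u v w : g) : ℝ :=
  -τ ⁅u, v⁆ w + τ ⁅u, w⁆ v - τ ⁅v, w⁆ u

/-- The linear functional `w ↦ dσ^b(u,v,w)`. -/
noncomputable def dSigma (σ : g →ₗ[ℝ] Module.Dual ℝ g) (u v : g) : Module.Dual ℝ g :=
  -σ ⁅u, v⁆ + (σ.flip v) ∘ₗ (LieAlgebra.ad ℝ g u : g →ₗ[ℝ] g)
    - (σ.flip u) ∘ₗ (LieAlgebra.ad ℝ g v : g →ₗ[ℝ] g)

/-- A generalized complex structure on a Lie algebra `g`. -/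
structure IsGCS (J : g →ₗ[ℝ] g) (R : Module.Dual ℝ g →ₗ[ℝ] g)
    (σ : g →ₗ[ℝ] Module.Dual ℝ g) : Prop where
  skewR : ∀ α β : Module.Dual ℝ g, α (R β) = -β (R α)
  skewσ : ∀ u v : g, σ u v = -σ v u
  c0a : J ∘ₗ J + R ∘ₗ σ = -LinearMap.id
  c0b : J ∘ₗ R = R ∘ₗ J.dualMap
  c0c : σ ∘ₗ J = J.dualMap ∘ₗ σ
  c1 : ∀ α β γ : Module.Dual ℝ g, α ⁅R β, R γ⁆ + β ⁅R γ, R α⁆ + γ ⁅R α, R β⁆ = 0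
  c2 : ∀ α β : Module.Dual ℝ g,
    J.dualMap (coad (R α) β - coad (R β) α)
      = coad (R α) (J.dualMap β) - coad (R β) (J.dualMap α)
  c3 : ∀ u v : g, ⁅J u, J v⁆ - J ⁅J u, v⁆ - J ⁅u, J v⁆ + J (J ⁅u, v⁆) = R (dSigma σ u v)
  c4 : ∀ u v w : g, dForm (fun a b => σ (J a) b) u v w =
    dForm (fun a b => σ a b) (J u) v w + dForm (fun a b => σ a b) u (J v) w +
      dForm (fun a b => σ a b) u v (J w)

/-- The endomorphism of `g ⊕ g*` associated to a triple `(J, R, σ)`. -/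
noncomputable def Kmap (J : g →ₗ[ℝ] g) (R : Module.Dual ℝ g →ₗ[ℝ] g)
    (σ : g →ₗ[ℝ] Module.Dual ℝ g) (a : g × Module.Dual ℝ g) : g × Module.Dual ℝ g :=
  (J a.1 + R a.2, σ a.1 - J.dualMap a.2)

/-- A generalized Kähler structure on a Lie algebra `g`. -/
structure IsGK (J₁ : g →ₗ[ℝ] g) (R₁ : Module.Dual ℝ g →ₗ[ℝ] g)
    (σ₁ : g →ₗ[ℝ] Module.Dual ℝ g) (J₂ : g →ₗ[ℝ] g) (R₂ : Module.Dual ℝ g →ₗ[ℝ] g)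
    (σ₂ : g →ₗ[ℝ] Module.Dual ℝ g) : Prop where
  gcs₁ : IsGCS J₁ R₁ σ₁
  gcs₂ : IsGCS J₂ R₂ σ₂
  comm : ∀ x : g × Module.Dual ℝ g,
    Kmap J₁ R₁ σ₁ (Kmap J₂ R₂ σ₂ x) = Kmap J₂ R₂ σ₂ (Kmap J₁ R₁ σ₁ x)
  symm : ∀ x y : g × Module.Dual ℝ g,
    pairing (Kmap J₁ R₁ σ₁ (Kmap J₂ R₂ σ₂ x)) y = pairing (Kmap J₁ R₁ σ₁ (Kmap J₂ R₂ σ₂ y)) x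
  posdef : ∀ x : g × Module.Dual ℝ g, x ≠ 0 → 0 < pairing (Kmap J₁ R₁ σ₁ (Kmap J₂ R₂ σ₂ x)) x



section AuxGK


private lemma even_finrank_of_sq_eq_neg {M : Type*} [AddCommGroup M] [Module ℝ M]
    [FiniteDimensional ℝ M] (f : M →ₗ[ℝ] M) (hf : ∀ x, f (f x) = -((4:ℝ) • x)) :
    Even (finrank ℝ M) := by
  have hcomp : f ∘ₗ f = (-(4:ℝ)) • LinearMap.id := by
    ext x; simpa [neg_smul] using hf x
  have hdet : LinearMap.det f * LinearMap.det f = (-(4:ℝ)) ^ finrank ℝ M := by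
    have := congrArg LinearMap.det hcomp
    rwa [LinearMap.det_comp, LinearMap.det_smul, LinearMap.det_id, mul_one] at this
  rw [← Nat.not_odd_iff_even]
  intro hodd
  have h1 : (-(4:ℝ)) ^ finrank ℝ M < 0 := hodd.pow_neg (by norm_num)
  nlinarith [sq_nonneg (LinearMap.det f)]

private lemma anticomm_contra {M : Type*} [AddCommGroup M] [Module ℝ M]
    [FiniteDimensional ℝ M] (hdim : finrank ℝ M = 4)
    (B : M →ₗ[ℝ] M →ₗ[ℝ] ℝ)
    (hsym : ∀ u v, B u v = B v u) (hpos : ∀ u, u ≠ 0 → 0 < B u u)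
    (S T : M →ₗ[ℝ] M)
    (hSsk : ∀ u v, B (S u) v = -B u (S v)) (hTsk : ∀ u v, B (T u) v = -B u (T v))
    (hanti : ∀ u, S (T u) = -T (S u)) (hSinj : LinearMap.ker S = ⊥)
    (hT2 : finrank ℝ (LinearMap.ker T) = 2) : False := by
  have hU2 : finrank ℝ (LinearMap.range T) = 2 := by
    have := LinearMap.finrank_range_add_finrank_ker T
    omega
  have hzero : ∀ u : M, B u u = 0 → u = 0 := by
    intro u hu
    by_contra h0
    exact (hpos u h0).ne' hu
  have hSu0 : ∀ u : M, B (S u) u = 0 := by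
    intro u; have h1 := hSsk u u; have h2 := hsym (S u) u; linarith
  have hTu0 : ∀ u : M, B (T u) u = 0 := by
    intro u; have h1 := hTsk u u; have h2 := hsym (T u) u; linarith
  have hUne : LinearMap.range T ≠ ⊥ := by
    intro hbot; rw [hbot] at hU2; simp [finrank_bot] at hU2
  obtain ⟨u, hu, hune⟩ := Submodule.exists_mem_ne_zero_of_ne_bot hUne
  have hSinj' : Function.Injective S := ker_eq_bot.mp hSinj
  have hSu_ne : S u ≠ 0 := fun hh => hune (hSinj' (by simpa using hh))
  have hSU : ∀ x ∈ LinearMap.range T, S x ∈ LinearMap.range T := by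
    rintro x ⟨w, rfl⟩
    exact ⟨-S w, by rw [map_neg, ← hanti]⟩
  have hBuu : 0 < B u u := hpos u hune
  have hBSuSu : 0 < B (S u) (S u) := hpos (S u) hSu_ne
  have hBuSu : B u (S u) = 0 := by rw [hsym]; exact hSu0 u
  -- span {u, S u} = range T
  have hindep : LinearIndependent ℝ ![u, S u] := by
    rw [LinearIndependent.pair_iff]
    intro s t hst
    have h1 : B (s • u + t • S u) u = 0 := by rw [hst]; simp
    rw [map_add, map_smul, map_smul] at h1
    simp only [LinearMap.smul_apply, smul_eq_mul, LinearMap.add_apply] at h1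
    rw [hSu0 u] at h1
    have hs : s = 0 := by
      have : s * B u u = 0 := by linarith
      rcases mul_eq_zero.mp this with hs | hb
      · exact hs
      · exact absurd hb hBuu.ne'
    refine ⟨hs, ?_⟩
    rw [hs, zero_smul, zero_add] at hst
    rcases smul_eq_zero.mp hst with ht | hb
    · exact ht
    · exact absurd hb hSu_ne
  have hrange : Set.range ![u, S u] = {u, S u} := by
    ext x
    simp only [Matrix.range_cons, Matrix.range_empty, Set.union_empty, Set.union_singleton,
      Set.mem_insert_iff, Set.mem_singleton_iff]
    tauto
  have hspanfin : finrank ℝ (Submodule.span ℝ ({u, S u} : Set M)) = 2 := by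
    have := finrank_span_eq_card hindep
    rw [hrange] at this
    simpa using this
  have hspanle : Submodule.span ℝ ({u, S u} : Set M) ≤ LinearMap.range T := by
    rw [Submodule.span_le]
    rintro x hx
    rcases hx with rfl | hx
    · exact hu
    · simp only [Set.mem_singleton_iff] at hx
      subst hx
      exact hSU u hu
  have hspan : Submodule.span ℝ ({u, S u} : Set M) = LinearMap.range T :=
    Submodule.eq_of_le_of_finrank_le hspanle (by rw [hU2, hspanfin])
  -- T u = c • S u
  obtain ⟨b, c, hbc⟩ := Submodule.mem_span_pair.mp (hspan ▸ LinearMap.mem_range_self T u)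
  have hb0 : b = 0 := by
    have h1 : B (T u) u = 0 := hTu0 u
    rw [← hbc, map_add, map_smul, map_smul] at h1
    simp only [LinearMap.smul_apply, smul_eq_mul, LinearMap.add_apply] at h1
    rw [hSu0 u] at h1
    have : b * B u u = 0 := by linarith
    rcases mul_eq_zero.mp this with hs | hbb
    · exact hs
    · exact absurd hbb hBuu.ne'
  have hTu : T u = c • S u := by rw [← hbc, hb0, zero_smul, zero_add]
  -- S (S u) = γ • u
  obtain ⟨γ, δ, hγδ⟩ := Submodule.mem_span_pair.mp
    (hspan ▸ hSU (S u) (hSU u hu))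
  have hδ0 : δ = 0 := by
    have h1 : B (S (S u)) (S u) = 0 := hSu0 (S u)
    rw [← hγδ, map_add, map_smul, map_smul] at h1
    simp only [LinearMap.smul_apply, smul_eq_mul, LinearMap.add_apply] at h1
    rw [hBuSu] at h1
    have : δ * B (S u) (S u) = 0 := by linarith
    rcases mul_eq_zero.mp this with hs | hbb
    · exact hs
    · exact absurd hbb hBSuSu.ne'
  have hSSu : S (S u) = γ • u := by rw [← hγδ, hδ0, zero_smul, add_zero]
  have hγ : γ * B u u = -B (S u) (S u) := by
    have h1 : B (S (S u)) u = -B (S u) (S u) := hSsk (S u) u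
    rw [hSSu, map_smul] at h1
    simpa using h1
  -- T (S u) = -c • γ • u
  have hTSu : T (S u) = -(c • γ • u) := by
    have h2 : -T (S u) = c • γ • u := by rw [← hanti u, hTu, map_smul, hSSu]
    exact neg_eq_iff_eq_neg.mp h2
  -- contradiction computation
  have e1 : B (T u) (S u) = c * B (S u) (S u) := by
    rw [hTu, map_smul]; simp
  have e2 : B (T u) (S u) = c * (γ * B u u) := by
    have hx : B u (-(c • γ • u)) = -(c * (γ * B u u)) := by
      rw [map_neg, smul_smul, map_smul]
      simp only [smul_eq_mul]
      ring
    rw [hTsk u (S u), hTSu, hx, neg_neg]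
  have hc0 : c = 0 := by
    rw [hγ] at e2
    have h2 : c * B (S u) (S u) = 0 := by rw [e1] at e2; linarith
    rcases mul_eq_zero.mp h2 with hs | hbb
    · exact hs
    · exact absurd hbb hBSuSu.ne'
  have hTu0' : T u = 0 := by rw [hTu, hc0, zero_smul]
  -- u ∈ ker T ∩ range T → u = 0
  obtain ⟨w, hw⟩ := hu
  have hfin : B u u = 0 := by
    have h1 : B (T w) u = -B w (T u) := hTsk w u
    rw [hw, hTu0', map_zero] at h1
    simpa using h1
  exact hune (hzero u hfin)


/-- The endomorphism `Kmap` as a bundled linear map. -/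
noncomputable def KL (J : g →ₗ[ℝ] g) (R : Module.Dual ℝ g →ₗ[ℝ] g)
    (σ : g →ₗ[ℝ] Module.Dual ℝ g) : (g × Module.Dual ℝ g) →ₗ[ℝ] (g × Module.Dual ℝ g) :=
  LinearMap.prod
    (J ∘ₗ LinearMap.fst ℝ g (Module.Dual ℝ g) + R ∘ₗ LinearMap.snd ℝ g (Module.Dual ℝ g))
    (σ ∘ₗ LinearMap.fst ℝ g (Module.Dual ℝ g) - J.dualMap ∘ₗ LinearMap.snd ℝ g (Module.Dual ℝ g))

lemma KL_apply (J : g →ₗ[ℝ] g) (R : Module.Dual ℝ g →ₗ[ℝ] g)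
    (σ : g →ₗ[ℝ] Module.Dual ℝ g) (x : g × Module.Dual ℝ g) :
    KL J R σ x = Kmap J R σ x := rfl

lemma pairing_def (x y : g × Module.Dual ℝ g) :
    pairing x y = (x.2 y.1 + y.2 x.1) / 2 := rfl

lemma pairing_comm (x y : g × Module.Dual ℝ g) : pairing x y = pairing y x := by
  simp only [pairing_def]; ring

lemma pairing_fst_zero (x y : g × Module.Dual ℝ g) (hx : x.1 = 0) (hy : y.1 = 0) :
    pairing x y = 0 := by
  simp [pairing_def, hx, hy]

lemma pairing_self (x : g × Module.Dual ℝ g) : pairing x x = x.2 x.1 := by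
  simp only [pairing_def]; ring

lemma pairing_add_left (x y z : g × Module.Dual ℝ g) :
    pairing (x + y) z = pairing x z + pairing y z := by
  simp [pairing_def]; ring

lemma pairing_sub_left (x y z : g × Module.Dual ℝ g) :
    pairing (x - y) z = pairing x z - pairing y z := by
  simp [pairing_def, LinearMap.sub_apply]; ring

lemma pairing_smul_left (c : ℝ) (x z : g × Module.Dual ℝ g) :
    pairing (c • x) z = c * pairing x z := by
  simp [pairing_def, LinearMap.smul_apply]; ring

lemma pairing_add_right (x y z : g × Module.Dual ℝ g) :
    pairing x (y + z) = pairing x y + pairing x z := by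
  simp [pairing_def]; ring

lemma pairing_sub_right (x y z : g × Module.Dual ℝ g) :
    pairing x (y - z) = pairing x y - pairing x z := by
  simp [pairing_def, LinearMap.sub_apply]; ring

lemma pairing_smul_right (c : ℝ) (x z : g × Module.Dual ℝ g) :
    pairing x (c • z) = c * pairing x z := by
  simp [pairing_def, LinearMap.smul_apply]; ring

/-- The neutral pairing as a bundled bilinear map. -/
noncomputable def pairBL : (g × Module.Dual ℝ g) →ₗ[ℝ] (g × Module.Dual ℝ g) →ₗ[ℝ] ℝ :=
  LinearMap.mk₂ ℝ pairing pairing_add_left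
    (fun c x z => by rw [pairing_smul_left, smul_eq_mul])
    pairing_add_right
    (fun c x z => by rw [pairing_smul_right, smul_eq_mul])

lemma pairBL_apply (x y : g × Module.Dual ℝ g) : pairBL x y = pairing x y := rfl

/-- K squares to minus the identity. -/
lemma KL_sq {J : g →ₗ[ℝ] g} {R : Module.Dual ℝ g →ₗ[ℝ] g}
    {σ : g →ₗ[ℝ] Module.Dual ℝ g} (hg : IsGCS J R σ) (x : g × Module.Dual ℝ g) :
    KL J R σ (KL J R σ x) = -x := by
  obtain ⟨u, α⟩ := x
  have hc0a : ∀ w : g, J (J w) + R (σ w) = -w := by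
    intro w
    have := congrArg (fun f => f w) hg.c0a
    simpa using this
  have hc0b : ∀ β : Module.Dual ℝ g, J (R β) = R (J.dualMap β) := by
    intro β
    have := congrArg (fun f => f β) hg.c0b
    simpa using this
  have hc0c : ∀ w : g, σ (J w) = J.dualMap (σ w) := by
    intro w
    have := congrArg (fun f => f w) hg.c0c
    simpa using this
  have hdual : ∀ β : Module.Dual ℝ g, σ (R β) + J.dualMap (J.dualMap β) = -β := by
    intro β
    ext v
    have h1 : σ (R β) v = -σ v (R β) := hg.skewσ (R β) v
    have h2 : σ v (R β) = -β (R (σ v)) := hg.skewR (σ v) β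
    have h3 : β (J (J v)) + β (R (σ v)) = -β v := by
      have := congrArg β (hc0a v)
      rw [map_add, map_neg] at this
      exact this
    simp only [LinearMap.add_apply, LinearMap.neg_apply, LinearMap.dualMap_apply]
    rw [h1, h2]
    linarith
  show (J (J u + R α) + R (σ u - J.dualMap α),
    σ (J u + R α) - J.dualMap (σ u - J.dualMap α)) = (-u, -α)
  refine Prod.ext ?_ ?_
  · show J (J u + R α) + R (σ u - J.dualMap α) = -u
    rw [map_add, map_sub, hc0b]
    linear_combination (norm := abel) hc0a u
  · show σ (J u + R α) - J.dualMap (σ u - J.dualMap α) = -α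
    rw [map_add, map_sub, hc0c]
    linear_combination (norm := abel) hdual α


lemma pairing_neg_left (x z : g × Module.Dual ℝ g) :
    pairing (-x) z = -pairing x z := by
  simp only [pairing_def, Prod.fst_neg, Prod.snd_neg, LinearMap.neg_apply, map_neg]
  ring

/-- K is skew for the neutral pairing. -/
lemma KL_skew {J : g →ₗ[ℝ] g} {R : Module.Dual ℝ g →ₗ[ℝ] g}
    {σ : g →ₗ[ℝ] Module.Dual ℝ g} (hg : IsGCS J R σ) (x y : g × Module.Dual ℝ g) :
    pairing (KL J R σ x) y = -pairing x (KL J R σ y) := by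
  obtain ⟨u, α⟩ := x
  obtain ⟨v, β⟩ := y
  show pairing (J u + R α, σ u - J.dualMap α) (v, β)
    = -pairing (u, α) (J v + R β, σ v - J.dualMap β)
  simp only [pairing_def, LinearMap.sub_apply, LinearMap.dualMap_apply, map_add]
  have h1 : σ u v = -σ v u := hg.skewσ u v
  have h2 : β (R α) = -α (R β) := hg.skewR β α
  ring_nf
  linarith

private lemma exists_section {V : Type*} {M : Type*} [AddCommGroup V] [Module ℝ V]
    [AddCommGroup M] [Module ℝ M] [FiniteDimensional ℝ V] [FiniteDimensional ℝ M]
    (W : Submodule ℝ V) (π : V →ₗ[ℝ] M)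
    (hinj : ∀ x ∈ W, π x = 0 → x = 0) (hrank : finrank ℝ W = finrank ℝ M) :
    ∃ L : M →ₗ[ℝ] V, (∀ u, L u ∈ W) ∧ (∀ u, π (L u) = u) ∧ (∀ x (_ : x ∈ W), L (π x) = x) := by
  set f : W →ₗ[ℝ] M := π ∘ₗ W.subtype with hf
  have hker : LinearMap.ker f = ⊥ := by
    rw [LinearMap.ker_eq_bot']
    intro z hz
    have := hinj (z : V) z.2 (by simpa [hf] using hz)
    exact Subtype.ext this
  have hinjf : Function.Injective f := LinearMap.ker_eq_bot.mp hker
  have hrange : LinearMap.range f = ⊤ := by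
    apply Submodule.eq_top_of_finrank_eq
    have h1 := LinearMap.finrank_range_add_finrank_ker f
    rw [hker] at h1
    simp only [finrank_bot, add_zero] at h1
    rw [h1, hrank]
  have hbij : Function.Bijective f := ⟨hinjf, LinearMap.range_eq_top.mp hrange⟩
  set e := LinearEquiv.ofBijective f hbij with he
  refine ⟨W.subtype ∘ₗ e.symm.toLinearMap, fun u => (e.symm u).2, fun u => ?_, fun x hx => ?_⟩
  · show π ((e.symm u : W) : V) = u
    have : f (e.symm u) = u := by
      rw [he]; exact (LinearEquiv.ofBijective f hbij).apply_symm_apply u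
    simpa [hf] using this
  · show ((e.symm (π x) : W) : V) = x
    have h1 : e ⟨x, hx⟩ = π x := by rw [he]; simp [hf]
    rw [← h1, e.symm_apply_apply]


set_option maxHeartbeats 1000000 in
lemma gk_master [FiniteDimensional ℝ g] (hdim : Module.finrank ℝ g = 4)
    (J₁ : g →ₗ[ℝ] g) (R₁ : Module.Dual ℝ g →ₗ[ℝ] g) (σ₁ : g →ₗ[ℝ] Module.Dual ℝ g)
    (J₂ : g →ₗ[ℝ] g) (R₂ : Module.Dual ℝ g →ₗ[ℝ] g) (σ₂ : g →ₗ[ℝ] Module.Dual ℝ g)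
    (h : IsGK J₁ R₁ σ₁ J₂ R₂ σ₂) :
    ∃ (B : g →ₗ[ℝ] g →ₗ[ℝ] ℝ) (S T : g →ₗ[ℝ] g) (E : Module.Dual ℝ g →ₗ[ℝ] g),
      (∀ u v, B u v = B v u) ∧ (∀ u, u ≠ 0 → 0 < B u u) ∧
      (∀ u v, B (S u) v = -B u (S v)) ∧ (∀ u v, B (T u) v = -B u (T v)) ∧
      (∀ u, S (T u) = -T (S u)) ∧ (∀ u, S (S u) + T (T u) = -((4:ℝ) • u)) ∧
      Function.Bijective E ∧ (∀ α, (2:ℝ) • R₁ α = S (E α)) ∧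
      (∀ α, (2:ℝ) • R₂ α = -T (E α)) := by
  classical
  set K1 := KL J₁ R₁ σ₁ with hK1def
  set K2 := KL J₂ R₂ σ₂ with hK2def
  have hc1 : ∀ x, K1 (K1 x) = -x := fun x => KL_sq h.gcs₁ x
  have hc2 : ∀ x, K2 (K2 x) = -x := fun x => KL_sq h.gcs₂ x
  have hcomm : ∀ x, K1 (K2 x) = K2 (K1 x) := fun x => h.comm x
  have hτsq : ∀ x, K1 (K2 (K1 (K2 x))) = x := by
    intro x
    rw [show K2 (K1 (K2 x)) = K1 (K2 (K2 x)) from (hcomm (K2 x)).symm, hc2, hc1, neg_neg]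
  have hGpos : ∀ x : g × Module.Dual ℝ g, x ≠ 0 → 0 < pairing (K1 (K2 x)) x :=
    fun x hx => h.posdef x hx
  have hGsym : ∀ x y, pairing (K1 (K2 x)) y = pairing (K1 (K2 y)) x := fun x y => h.symm x y
  have hsk1 : ∀ x y, pairing (K1 x) y = -pairing x (K1 y) := fun x y => KL_skew h.gcs₁ x y
  have hsk2 : ∀ x y, pairing (K2 x) y = -pairing x (K2 y) := fun x y => KL_skew h.gcs₂ x y
  set τ : (g × Module.Dual ℝ g) →ₗ[ℝ] (g × Module.Dual ℝ g) := K1 ∘ₗ K2 with hτdef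
  have hτ : ∀ x, τ x = K1 (K2 x) := fun x => rfl
  set Vp : Submodule ℝ (g × Module.Dual ℝ g) := LinearMap.ker (τ - LinearMap.id) with hVpdef
  set Vm : Submodule ℝ (g × Module.Dual ℝ g) := LinearMap.ker (τ + LinearMap.id) with hVmdef
  have hVp : ∀ x, x ∈ Vp ↔ K1 (K2 x) = x := by
    intro x
    rw [hVpdef, LinearMap.mem_ker, LinearMap.sub_apply, LinearMap.id_apply, sub_eq_zero, hτ]
  have hVm : ∀ x, x ∈ Vm ↔ K1 (K2 x) = -x := by
    intro x
    rw [hVmdef, LinearMap.mem_ker, LinearMap.add_apply, LinearMap.id_apply,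
      add_eq_zero_iff_eq_neg, hτ]
  -- positivity on Vp, negativity on Vm
  have posVp : ∀ x, x ∈ Vp → x ≠ 0 → 0 < pairing x x := by
    intro x hx hne
    have := hGpos x hne
    rwa [(hVp x).mp hx] at this
  have negVm : ∀ x, x ∈ Vm → x ≠ 0 → pairing x x < 0 := by
    intro x hx hne
    have := hGpos x hne
    rw [(hVm x).mp hx, pairing_neg_left] at this
    linarith
  -- elements with zero first component
  have hfst0 : ∀ x : g × Module.Dual ℝ g, x.1 = 0 → pairing x x = 0 := by
    intro x hx
    rw [pairing_self, hx, map_zero]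
  have injp : ∀ x, x ∈ Vp → x.1 = 0 → x = 0 := by
    intro x hx h0
    by_contra hne
    exact absurd (hfst0 x h0) (ne_of_gt (posVp x hx hne))
  have injm : ∀ x, x ∈ Vm → x.1 = 0 → x = 0 := by
    intro x hx h0
    by_contra hne
    exact absurd (hfst0 x h0) (ne_of_lt (negVm x hx hne))
  -- decomposition
  have hmemp : ∀ x : g × Module.Dual ℝ g, (2⁻¹ : ℝ) • (x + τ x) ∈ Vp := by
    intro x
    rw [hVp, ← hτ]
    rw [map_smul, map_add]
    rw [show τ (τ x) = x from hτsq x]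
    module
  have hmemm : ∀ x : g × Module.Dual ℝ g, (2⁻¹ : ℝ) • (x - τ x) ∈ Vm := by
    intro x
    rw [hVm, ← hτ]
    rw [map_smul, map_sub]
    rw [show τ (τ x) = x from hτsq x]
    module
  have hdecomp : ∀ x : g × Module.Dual ℝ g,
      (2⁻¹ : ℝ) • (x + τ x) + (2⁻¹ : ℝ) • (x - τ x) = x := by
    intro x
    module
  -- dimensions
  have hdimdual : finrank ℝ (Module.Dual ℝ g) = 4 := by
    rw [Subspace.dual_finrank_eq, hdim]
  have hdimV : finrank ℝ (g × Module.Dual ℝ g) = 8 := by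
    rw [Module.finrank_prod, hdim, hdimdual]
  have hsup : Vp ⊔ Vm = ⊤ := by
    rw [Submodule.eq_top_iff']
    intro x
    rw [← hdecomp x]
    exact Submodule.add_mem_sup (hmemp x) (hmemm x)
  have hinf : Vp ⊓ Vm = ⊥ := by
    rw [Submodule.eq_bot_iff]
    intro x hx
    have h1 := (hVp x).mp hx.1
    have h2 := (hVm x).mp hx.2
    rw [h1] at h2
    have : (2:ℝ) • x = 0 := by
      rw [two_smul]
      nth_rewrite 2 [h2]
      abel
    simpa using (smul_eq_zero.mp this).resolve_left (by norm_num)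
  have hle4p : finrank ℝ Vp ≤ 4 := by
    have hinjc : Function.Injective
        ⇑((LinearMap.fst ℝ g (Module.Dual ℝ g)) ∘ₗ Vp.subtype) := by
      intro a b hab
      have hab' : (a : g × Module.Dual ℝ g).1 = (b : g × Module.Dual ℝ g).1 := hab
      have hz : ((a : g × Module.Dual ℝ g) - (b : g × Module.Dual ℝ g)).1 = 0 := by
        rw [Prod.fst_sub, hab', sub_self]
      have hmem : ((a : g × Module.Dual ℝ g) - (b : g × Module.Dual ℝ g)) ∈ Vp :=
        Vp.sub_mem a.2 b.2
      have h0 := injp _ hmem hz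
      rw [sub_eq_zero] at h0
      exact Subtype.ext h0
    rw [← hdim]
    exact LinearMap.finrank_le_finrank_of_injective hinjc
  have hle4m : finrank ℝ Vm ≤ 4 := by
    have hinjc : Function.Injective
        ⇑((LinearMap.fst ℝ g (Module.Dual ℝ g)) ∘ₗ Vm.subtype) := by
      intro a b hab
      have hab' : (a : g × Module.Dual ℝ g).1 = (b : g × Module.Dual ℝ g).1 := hab
      have hz : ((a : g × Module.Dual ℝ g) - (b : g × Module.Dual ℝ g)).1 = 0 := by
        rw [Prod.fst_sub, hab', sub_self]
      have hmem : ((a : g × Module.Dual ℝ g) - (b : g × Module.Dual ℝ g)) ∈ Vm :=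
        Vm.sub_mem a.2 b.2
      have h0 := injm _ hmem hz
      rw [sub_eq_zero] at h0
      exact Subtype.ext h0
    rw [← hdim]
    exact LinearMap.finrank_le_finrank_of_injective hinjc
  have hsumdim : finrank ℝ Vp + finrank ℝ Vm = 8 := by
    have := Submodule.finrank_sup_add_finrank_inf_eq Vp Vm
    rw [hsup, hinf] at this
    simp only [finrank_top, finrank_bot, add_zero] at this
    rw [← this, hdimV]
  have hdp : finrank ℝ Vp = 4 := by omega
  have hdm : finrank ℝ Vm = 4 := by omega
  -- sections
  obtain ⟨Lp, hLpmem, hLpfst, hLpsec⟩ :=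
    exists_section Vp (LinearMap.fst ℝ g (Module.Dual ℝ g)) injp (by rw [hdp, hdim])
  obtain ⟨Lm, hLmmem, hLmfst, hLmsec⟩ :=
    exists_section Vm (LinearMap.fst ℝ g (Module.Dual ℝ g)) injm (by rw [hdm, hdim])
  -- K1 preserves Vp and Vm
  have hK1p : ∀ x, x ∈ Vp → K1 x ∈ Vp := by
    intro x hx
    rw [hVp]
    rw [show K2 (K1 x) = K1 (K2 x) from (hcomm x).symm, (hVp x).mp hx]
  have hK1m : ∀ x, x ∈ Vm → K1 x ∈ Vm := by
    intro x hx
    rw [hVm]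
    rw [show K2 (K1 x) = K1 (K2 x) from (hcomm x).symm, (hVm x).mp hx, map_neg]
  -- K2 = -K1 on Vp, K2 = K1 on Vm
  have hK2p : ∀ x, x ∈ Vp → K2 x = -K1 x := by
    intro x hx
    have h1 : K1 (K1 (K2 x)) = K1 x := congrArg K1 ((hVp x).mp hx)
    rw [hc1] at h1
    rw [← h1, neg_neg]
  have hK2m : ∀ x, x ∈ Vm → K2 x = K1 x := by
    intro x hx
    have h1 : K1 (K1 (K2 x)) = K1 (-x) := congrArg K1 ((hVm x).mp hx)
    rw [hc1, map_neg, neg_inj] at h1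
    exact h1
  -- transported complex structures
  set π : (g × Module.Dual ℝ g) →ₗ[ℝ] g := LinearMap.fst ℝ g (Module.Dual ℝ g) with hπdef
  set Ip : g →ₗ[ℝ] g := π ∘ₗ K1 ∘ₗ Lp with hIpdef
  set Im : g →ₗ[ℝ] g := π ∘ₗ K1 ∘ₗ Lm with hImdef
  have hIp : ∀ u, Ip u = (K1 (Lp u)).1 := fun u => rfl
  have hIm : ∀ u, Im u = (K1 (Lm u)).1 := fun u => rfl
  have hLpIp : ∀ u, Lp (Ip u) = K1 (Lp u) := by
    intro u
    rw [hIp]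
    exact hLpsec (K1 (Lp u)) (hK1p _ (hLpmem u))
  have hLmIm : ∀ u, Lm (Im u) = K1 (Lm u) := by
    intro u
    rw [hIm]
    exact hLmsec (K1 (Lm u)) (hK1m _ (hLmmem u))
  have hIpsq : ∀ u, Ip (Ip u) = -u := by
    intro u
    rw [hIp, hLpIp, hc1]
    show -(Lp u).1 = -u
    rw [show (Lp u).1 = u from hLpfst u]
  have hImsq : ∀ u, Im (Im u) = -u := by
    intro u
    rw [hIm, hLmIm, hc1]
    show -(Lm u).1 = -u
    rw [show (Lm u).1 = u from hLmfst u]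
  -- cross orthogonality and the key metric identity
  have hcross : ∀ p, p ∈ Vp → ∀ m, m ∈ Vm → pairing p m = 0 := by
    intro p hp m hm
    have h1 := hGsym p m
    rw [(hVp p).mp hp, (hVm m).mp hm, pairing_neg_left, pairing_comm m p] at h1
    linarith
  have hkeyB : ∀ u v, pairing (Lm u) (Lm v) = -pairing (Lp u) (Lp v) := by
    intro u v
    have hiso : pairing (Lp u - Lm u) (Lp v - Lm v) = 0 := by
      apply pairing_fst_zero
      · show (Lp u - Lm u).1 = 0
        rw [Prod.fst_sub]
        change π (Lp u) - π (Lm u) = 0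
        rw [hLpfst, hLmfst, sub_self]
      · show (Lp v - Lm v).1 = 0
        rw [Prod.fst_sub]
        change π (Lp v) - π (Lm v) = 0
        rw [hLpfst, hLmfst, sub_self]
    rw [pairing_sub_left, pairing_sub_right, pairing_sub_right,
      hcross (Lp u) (hLpmem u) (Lm v) (hLmmem v),
      pairing_comm (Lm u) (Lp v), hcross (Lp v) (hLpmem v) (Lm u) (hLmmem u)] at hiso
    linarith
  -- the bilinear form
  set B : g →ₗ[ℝ] g →ₗ[ℝ] ℝ := (pairBL.comp Lp).compl₂ Lp with hBdef
  have hB : ∀ u v, B u v = pairing (Lp u) (Lp v) := by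
    intro u v
    rw [hBdef, LinearMap.compl₂_apply, LinearMap.comp_apply, pairBL_apply]
  have hBm : ∀ u v, B u v = -pairing (Lm u) (Lm v) := by
    intro u v
    rw [hB, hkeyB, neg_neg]
  have hBsym : ∀ u v, B u v = B v u := by
    intro u v
    rw [hB, hB, pairing_comm]
  have hBpos : ∀ u, u ≠ 0 → 0 < B u u := by
    intro u hu
    rw [hB]
    apply posVp (Lp u) (hLpmem u)
    intro h0
    apply hu
    rw [← hLpfst u, h0, map_zero]
  -- skewness of Ip, Im with respect to B
  have hIpsk : ∀ u v, B (Ip u) v = -B u (Ip v) := by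
    intro u v
    rw [hB, hB, hLpIp, hLpIp]
    exact hsk1 _ _
  have hImsk : ∀ u v, B (Im u) v = -B u (Im v) := by
    intro u v
    have h1 : pairing (K1 (Lm u)) (Lm v) = -pairing (Lm u) (K1 (Lm v)) := hsk1 _ _
    rw [hBm, hBm, hLmIm, hLmIm, h1]
  -- S and T
  set S : g →ₗ[ℝ] g := Ip - Im with hSdef
  set T : g →ₗ[ℝ] g := Ip + Im with hTdef
  have hSapp : ∀ u, S u = Ip u - Im u := by
    intro u; rw [hSdef]; exact LinearMap.sub_apply _ _ _
  have hTapp : ∀ u, T u = Ip u + Im u := by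
    intro u; rw [hTdef]; exact LinearMap.add_apply _ _ _
  have hSsk : ∀ u v, B (S u) v = -B u (S v) := by
    intro u v
    rw [hSapp, hSapp]
    rw [map_sub]
    rw [LinearMap.sub_apply, hIpsk, hImsk]
    rw [(B u).map_sub (Ip v) (Im v)]
    ring
  have hTsk : ∀ u v, B (T u) v = -B u (T v) := by
    intro u v
    rw [hTapp, hTapp]
    rw [map_add]
    rw [LinearMap.add_apply, hIpsk, hImsk]
    rw [(B u).map_add (Ip v) (Im v)]
    ring
  have hanti : ∀ u, S (T u) = -T (S u) := by
    intro u
    rw [hSapp, hTapp, hTapp, hSapp]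
    simp only [map_add, map_sub, hIpsq, hImsq]
    abel
  have hsum : ∀ u, S (S u) + T (T u) = -((4:ℝ) • u) := by
    intro u
    rw [hSapp, hSapp, hTapp, hTapp]
    simp only [map_add, map_sub, hIpsq, hImsq]
    module
  -- the map E
  set E : Module.Dual ℝ g →ₗ[ℝ] g := π ∘ₗ τ ∘ₗ LinearMap.inr ℝ g (Module.Dual ℝ g) with hEdef
  have hE : ∀ α, E α = (K1 (K2 (0, α))).1 := fun α => rfl
  have hEpos : ∀ α : Module.Dual ℝ g, α ≠ 0 → 0 < α (E α) := by
    intro α hα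
    have hx : ((0, α) : g × Module.Dual ℝ g) ≠ 0 := by
      simp only [ne_eq, Prod.mk_eq_zero, not_and]
      intro h0
      exact hα
    have := hGpos (0, α) hx
    rw [pairing_def] at this
    have h2 : (K1 (K2 (0, α))).2 ((0, α) : g × Module.Dual ℝ g).1 = 0 := by
      show (K1 (K2 (0, α))).2 (0 : g) = 0
      rw [map_zero]
    rw [h2] at this
    have h3 : ((0, α) : g × Module.Dual ℝ g).2 (K1 (K2 (0, α))).1 = α (E α) := by rw [hE]
    rw [h3] at this
    linarith
  have hEinj : Function.Injective E := by
    rw [← LinearMap.ker_eq_bot, LinearMap.ker_eq_bot']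
    intro α hα
    by_contra hne
    have := hEpos α hne
    rw [hα, map_zero] at this
    exact lt_irrefl 0 this
  have hEbij : Function.Bijective E := by
    refine ⟨hEinj, ?_⟩
    rw [← LinearMap.range_eq_top]
    apply Submodule.eq_top_of_finrank_eq
    have h1 := LinearMap.finrank_range_add_finrank_ker E
    rw [LinearMap.ker_eq_bot.mpr hEinj] at h1
    simp only [finrank_bot, add_zero] at h1
    rw [h1, hdimdual, hdim]
  -- the formulas 2 R₁ = S ∘ E and 2 R₂ = -T ∘ E
  have hform : ∀ α : Module.Dual ℝ g, (2:ℝ) • R₁ α = S (E α) ∧ (2:ℝ) • R₂ α = -T (E α) := by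
    intro α
    set x : g × Module.Dual ℝ g := (0, α) with hxdef
    set p : g × Module.Dual ℝ g := (2⁻¹ : ℝ) • (x + τ x) with hpdef
    set m : g × Module.Dual ℝ g := (2⁻¹ : ℝ) • (x - τ x) with hmdef
    have hp : p ∈ Vp := hmemp x
    have hm : m ∈ Vm := hmemm x
    have hpm : p + m = x := hdecomp x
    have hfp : p.1 = (2⁻¹ : ℝ) • E α := by
      rw [hpdef, Prod.smul_fst, Prod.fst_add]
      rw [show x.1 = (0 : g) from rfl]
      rw [show (τ x).1 = E α from rfl]
      rw [zero_add]
    have hfm : m.1 = -((2⁻¹ : ℝ) • E α) := by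
      rw [hmdef, Prod.smul_fst, Prod.fst_sub]
      rw [show x.1 = (0 : g) from rfl]
      rw [show (τ x).1 = E α from rfl]
      rw [zero_sub, smul_neg]
    have hLp_p : Lp p.1 = p := hLpsec p hp
    have hLm_m : Lm m.1 = m := hLmsec m hm
    have hIp_p : Ip p.1 = (K1 p).1 := by rw [hIp, hLp_p]
    have hIm_m : Im m.1 = (K1 m).1 := by rw [hIm, hLm_m]
    have hK1x : (K1 x).1 = R₁ α := by
      show (J₁ (0:g) + R₁ α) = R₁ α
      rw [map_zero, zero_add]
    have hK2x : (K2 x).1 = R₂ α := by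
      show (J₂ (0:g) + R₂ α) = R₂ α
      rw [map_zero, zero_add]
    have hsplit1 : R₁ α = (K1 p).1 + (K1 m).1 := by
      rw [← hK1x, ← hpm, map_add, Prod.fst_add]
    have hsplit2 : R₂ α = (K2 p).1 + (K2 m).1 := by
      rw [← hK2x, ← hpm, map_add, Prod.fst_add]
    constructor
    · rw [hsplit1, ← hIp_p, ← hIm_m, hfp, hfm, hSapp]
      simp only [map_smul, map_neg]
      module
    · rw [hsplit2, hK2p p hp, hK2m m hm, Prod.fst_neg, ← hIp_p, ← hIm_m, hfp, hfm, hTapp]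
      simp only [map_smul, map_neg]
      module
  exact ⟨B, S, T, E, hBsym, hBpos, hSsk, hTsk, hanti, hsum, hEbij,
    fun α => (hform α).1, fun α => (hform α).2⟩

end AuxGK

/-- type restrictions for a generalized Kähler structure in dimension 4. -/
theorem gk_type_restriction [FiniteDimensional ℝ g]
    (hdim : Module.finrank ℝ g = 4)
    (J₁ : g →ₗ[ℝ] g) (R₁ : Module.Dual ℝ g →ₗ[ℝ] g) (σ₁ : g →ₗ[ℝ] Module.Dual ℝ g)
    (J₂ : g →ₗ[ℝ] g) (R₂ : Module.Dual ℝ g →ₗ[ℝ] g) (σ₂ : g →ₗ[ℝ] Module.Dual ℝ g)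
    (h : IsGK J₁ R₁ σ₁ J₂ R₂ σ₂) (hR₁ : R₁ ≠ 0) (hR₂ : R₂ ≠ 0) :
    (Function.Bijective R₁ ∧ Function.Bijective R₂) ∨
    (Module.finrank ℝ (LinearMap.range R₁) = 2 ∧
      Module.finrank ℝ (LinearMap.range R₂) = 2 ∧
      LinearMap.range R₁ ⊓ LinearMap.range R₂ = ⊥) := by
  obtain ⟨B, S, T, E, hBsym, hBpos, hSsk, hTsk, hanti, hsum, hEbij, hf1, hf2⟩ :=
    gk_master hdim J₁ R₁ σ₁ J₂ R₂ σ₂ h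
  have hdimdual : finrank ℝ (Module.Dual ℝ g) = 4 := by
    rw [Subspace.dual_finrank_eq, hdim]
  -- kernel correspondences
  have hker1 : ∀ α, R₁ α = 0 ↔ S (E α) = 0 := by
    intro α
    constructor
    · intro h0
      have h1 := hf1 α
      rw [h0, smul_zero] at h1
      exact h1.symm
    · intro h0
      have h1 := hf1 α
      rw [h0] at h1
      have := smul_eq_zero.mp h1
      exact this.resolve_left (by norm_num)
  have hker2 : ∀ α, R₂ α = 0 ↔ T (E α) = 0 := by
    intro α
    constructor
    · intro h0
      have h1 := hf2 α
      rw [h0, smul_zero] at h1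
      have := congrArg Neg.neg h1
      rw [neg_zero, neg_neg] at this
      exact this.symm
    · intro h0
      have h1 := hf2 α
      rw [h0, neg_zero] at h1
      have := smul_eq_zero.mp h1
      exact this.resolve_left (by norm_num)
  -- joint kernel of S, T is trivial
  have hST0 : ∀ u, S u = 0 → T u = 0 → u = 0 := by
    intro u h1 h2
    have h3 := hsum u
    rw [h1, h2, map_zero, map_zero, add_zero] at h3
    have h4 : (4:ℝ) • u = 0 := by
      rw [← neg_eq_zero, ← h3]
    have := smul_eq_zero.mp h4
    exact this.resolve_left (by norm_num)
  -- S and T are nonzero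
  have hSne : S ≠ 0 := by
    intro hS0
    apply hR₁
    ext α
    have h1 := hf1 α
    rw [hS0, LinearMap.zero_apply] at h1
    have := smul_eq_zero.mp h1
    simpa using this.resolve_left (by norm_num)
  have hTne : T ≠ 0 := by
    intro hT0
    apply hR₂
    ext α
    have h1 := hf2 α
    rw [hT0, LinearMap.zero_apply, neg_zero] at h1
    have := smul_eq_zero.mp h1
    simpa using this.resolve_left (by norm_num)
  -- invariance of kernels
  have hTkerS : ∀ x ∈ LinearMap.ker S, T x ∈ LinearMap.ker S := by
    intro x hx
    rw [LinearMap.mem_ker] at hx ⊢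
    rw [hanti x, hx, map_zero, neg_zero]
  have hSkerT : ∀ x ∈ LinearMap.ker T, S x ∈ LinearMap.ker T := by
    intro x hx
    rw [LinearMap.mem_ker] at hx ⊢
    have h1 : T (S x) = -S (T x) := by rw [hanti x, neg_neg]
    rw [h1, hx, map_zero, neg_zero]
  -- evenness of kernel dimensions
  have hevenS : Even (finrank ℝ (LinearMap.ker S)) := by
    apply even_finrank_of_sq_eq_neg (T.restrict hTkerS)
    intro z
    apply Subtype.ext
    show T (T (z : g)) = -((4:ℝ) • (z : g))
    have h3 := hsum (z : g)
    have hz : S ((z : g)) = 0 := LinearMap.mem_ker.mp z.2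
    rw [hz, map_zero, zero_add] at h3
    exact h3
  have hevenT : Even (finrank ℝ (LinearMap.ker T)) := by
    apply even_finrank_of_sq_eq_neg (S.restrict hSkerT)
    intro z
    apply Subtype.ext
    show S (S (z : g)) = -((4:ℝ) • (z : g))
    have h3 := hsum (z : g)
    have hz : T ((z : g)) = 0 := LinearMap.mem_ker.mp z.2
    rw [hz, map_zero, add_zero] at h3
    exact h3
  -- kernel dimension is 2 when nontrivial
  have hdim2 : ∀ (F : g →ₗ[ℝ] g), F ≠ 0 → Even (finrank ℝ (LinearMap.ker F)) →
      LinearMap.ker F ≠ ⊥ → finrank ℝ (LinearMap.ker F) = 2 := by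
    intro F hFne heven hker
    have h1 : finrank ℝ (LinearMap.ker F) ≤ 4 := by
      rw [← hdim]
      exact Submodule.finrank_le _
    have h2 : finrank ℝ (LinearMap.ker F) ≠ 0 := by
      intro h0
      exact hker (Submodule.finrank_eq_zero.mp h0)
    have h3 : finrank ℝ (LinearMap.ker F) ≠ 4 := by
      intro h4
      apply hFne
      have : LinearMap.ker F = ⊤ := Submodule.eq_top_of_finrank_eq (by rw [h4, hdim])
      exact LinearMap.ker_eq_top.mp this
    obtain ⟨r, hr⟩ := heven
    omega
  by_cases hS : LinearMap.ker S = ⊥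
  · by_cases hT : LinearMap.ker T = ⊥
    · -- both bijective
      left
      have hSinj : Function.Injective S := LinearMap.ker_eq_bot.mp hS
      have hTinj : Function.Injective T := LinearMap.ker_eq_bot.mp hT
      have hSsurj : Function.Surjective S := LinearMap.injective_iff_surjective.mp hSinj
      have hTsurj : Function.Surjective T := LinearMap.injective_iff_surjective.mp hTinj
      constructor
      · constructor
        · intro α β hab
          apply hEbij.1
          apply hSinj
          rw [← hf1, ← hf1, hab]
        · intro v
          obtain ⟨w, hw⟩ := hSsurj ((2:ℝ) • v)
          obtain ⟨α, hα⟩ := hEbij.2 w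
          refine ⟨α, ?_⟩
          have h1 := hf1 α
          rw [hα, hw] at h1
          exact smul_right_injective g (by norm_num : (2:ℝ) ≠ 0) h1
      · constructor
        · intro α β hab
          apply hEbij.1
          apply hTinj
          have h1 := hf2 α
          have h2 := hf2 β
          rw [hab] at h1
          rw [h1] at h2
          exact neg_inj.mp h2
        · intro v
          obtain ⟨w, hw⟩ := hTsurj (-(2:ℝ) • v)
          obtain ⟨α, hα⟩ := hEbij.2 w
          refine ⟨α, ?_⟩
          have h1 := hf2 α
          rw [hα, hw] at h1
          have h2 : (2:ℝ) • R₂ α = (2:ℝ) • v := by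
            rw [h1, neg_smul, neg_neg]
          exact smul_right_injective g (by norm_num : (2:ℝ) ≠ 0) h2
    · -- ker S = ⊥, ker T ≠ ⊥ : contradiction
      exfalso
      exact anticomm_contra hdim B hBsym hBpos S T hSsk hTsk hanti hS
        (hdim2 T hTne hevenT hT)
  · by_cases hT : LinearMap.ker T = ⊥
    · -- ker T = ⊥, ker S ≠ ⊥ : contradiction
      exfalso
      have hanti' : ∀ u, T (S u) = -S (T u) := by
        intro u
        rw [hanti u, neg_neg]
      exact anticomm_contra hdim B hBsym hBpos T S hTsk hSsk hanti' hT
        (hdim2 S hSne hevenS hS)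
    · -- both kernels 2-dimensional
      right
      have hS2 : finrank ℝ (LinearMap.ker S) = 2 := hdim2 S hSne hevenS hS
      have hT2 : finrank ℝ (LinearMap.ker T) = 2 := hdim2 T hTne hevenT hT
      -- ranges of R₁, R₂ agree with ranges of S, T
      have hcomp1 : S ∘ₗ E = (2:ℝ) • R₁ := by
        ext α
        rw [LinearMap.comp_apply, LinearMap.smul_apply, hf1]
      have hcomp2 : T ∘ₗ E = (-2:ℝ) • R₂ := by
        ext α
        rw [LinearMap.comp_apply, LinearMap.smul_apply]
        have h1 := hf2 α
        have : T (E α) = -((2:ℝ) • R₂ α) := by rw [h1, neg_neg]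
        rw [this, ← neg_smul]
      have hrange1 : LinearMap.range R₁ = LinearMap.range S := by
        have e1 : LinearMap.range (S ∘ₗ E) = LinearMap.range S :=
          LinearMap.range_comp_of_range_eq_top S (LinearMap.range_eq_top.mpr hEbij.2)
        rw [hcomp1] at e1
        rw [← e1, LinearMap.range_smul _ (2:ℝ) (by norm_num)]
      have hrange2 : LinearMap.range R₂ = LinearMap.range T := by
        have e1 : LinearMap.range (T ∘ₗ E) = LinearMap.range T :=
          LinearMap.range_comp_of_range_eq_top T (LinearMap.range_eq_top.mpr hEbij.2)
        rw [hcomp2] at e1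
        rw [← e1, LinearMap.range_smul _ (-2:ℝ) (by norm_num)]
      have hrk1 : finrank ℝ (LinearMap.range R₁) = 2 := by
        rw [hrange1]
        have := LinearMap.finrank_range_add_finrank_ker S
        rw [hS2, hdim] at this
        omega
      have hrk2 : finrank ℝ (LinearMap.range R₂) = 2 := by
        rw [hrange2]
        have := LinearMap.finrank_range_add_finrank_ker T
        rw [hT2, hdim] at this
        omega
      refine ⟨hrk1, hrk2, ?_⟩
      -- kernels of R₁ and R₂ intersect trivially
      have hkerinf : LinearMap.ker R₁ ⊓ LinearMap.ker R₂ = ⊥ := by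
        rw [Submodule.eq_bot_iff]
        intro α hα
        have h1 : S (E α) = 0 := (hker1 α).mp (LinearMap.mem_ker.mp hα.1)
        have h2 : T (E α) = 0 := (hker2 α).mp (LinearMap.mem_ker.mp hα.2)
        have h3 : E α = 0 := hST0 (E α) h1 h2
        apply hEbij.1
        rw [h3, map_zero]
      have hkR1 : finrank ℝ (LinearMap.ker R₁) = 2 := by
        have h1 := LinearMap.finrank_range_add_finrank_ker R₁
        rw [hrk1, hdimdual] at h1
        omega
      have hkR2 : finrank ℝ (LinearMap.ker R₂) = 2 := by
        have h1 := LinearMap.finrank_range_add_finrank_ker R₂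
        rw [hrk2, hdimdual] at h1
        omega
      have hkersup : LinearMap.ker R₁ ⊔ LinearMap.ker R₂ = ⊤ := by
        apply Submodule.eq_top_of_finrank_eq
        have h1 := Submodule.finrank_sup_add_finrank_inf_eq (LinearMap.ker R₁)
          (LinearMap.ker R₂)
        rw [hkerinf, hkR1, hkR2] at h1
        simp only [finrank_bot, add_zero] at h1
        rw [h1, hdimdual]
      rw [Submodule.eq_bot_iff]
      intro v hv
      obtain ⟨β₁, hβ₁⟩ := hv.1
      obtain ⟨β₂, hβ₂⟩ := hv.2
      rw [← Module.forall_dual_apply_eq_zero_iff ℝ v]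
      intro φ
      have hφ : φ ∈ LinearMap.ker R₁ ⊔ LinearMap.ker R₂ := by
        rw [hkersup]
        trivial
      obtain ⟨φ₁, hφ₁, φ₂, hφ₂, rfl⟩ := Submodule.mem_sup.mp hφ
      have e1 : φ₁ v = 0 := by
        rw [← hβ₁]
        rw [h.gcs₁.skewR φ₁ β₁, LinearMap.mem_ker.mp hφ₁, map_zero, neg_zero]
      have e2 : φ₂ v = 0 := by
        rw [← hβ₂]
        rw [h.gcs₂.skewR φ₂ β₂, LinearMap.mem_ker.mp hφ₂, map_zero, neg_zero]
      rw [LinearMap.add_apply, e1, e2, add_zero]
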